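/- Let G be a topological group acting continuously on topological spaces X and Y such that the action on X is proper and the action on Y is proper and co-compact. Then every G-equivariant continuous map f : Y → X is a proper map. -/

import Mathlib

open Topology Filter


/-- Let `G` be a topological group acting continuously on topological spaces
`X` and `Y`, with the action on `X` proper and the action on `Y` proper and co-compact.
Then every `G`-equivariant continuous map `f : Y → X` is a proper map.
Properness of an action means the map `(z, γ) ↦ (z, γ • z)` is proper; co-compactness is
witnessed by a compact `F ⊆ Y` with `G • F = Y`. -/
theorem equivariant_map_is_proper
    {G X Y : Type*} [Group G] [TopologicalSpace G] [IsTopologicalGroup G]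
    [TopologicalSpace X] [TopologicalSpace Y]
    [MulAction G X] [MulAction G Y] [ContinuousSMul G X] [ContinuousSMul G Y]
    (hX : IsProperMap (fun p : X × G => (p.1, p.2 • p.1)))
    (hY : IsProperMap (fun p : Y × G => (p.1, p.2 • p.1)))
    (hcocompact : ∃ F : Set Y, IsCompact F ∧ ∀ y : Y, ∃ g : G, ∃ z ∈ F, g • z = y)
    (f : Y → X) (hf : Continuous f)
    (hequiv : ∀ (g : G) (y : Y), f (g • y) = g • f y) :
    IsProperMap f := by
  obtain ⟨F, hF, hFcov⟩ := hcocompact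
  -- choice functions: y = g y • z y, z y ∈ F
  choose g z hzF hgz using hFcov
  rw [isProperMap_iff_ultrafilter]
  refine ⟨hf, fun 𝒰 x hx => ?_⟩
  -- the ultrafilter of `z`-components lives in the compact set F, hence converges
  have hzmem : F ∈ Ultrafilter.map z 𝒰 :=
    Filter.mem_map.2 (Filter.univ_mem' fun y => hzF y)
  obtain ⟨z₀, hz₀F, hz₀⟩ := hF.ultrafilter_le_nhds _ (Filter.le_principal_iff.2 hzmem)
  have hz₀' : Filter.Tendsto z 𝒰 (𝓝 z₀) := hz₀
  -- apply properness of the action on X to the ultrafilter of pairs (f (z y), g y)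
  have key : Filter.Tendsto ((fun p : X × G => (p.1, p.2 • p.1)) ∘ fun y => (f (z y), g y))
      𝒰 (𝓝 (f z₀, x)) := by
    have h1 : Filter.Tendsto (fun y => f (z y)) 𝒰 (𝓝 (f z₀)) :=
      (hf.tendsto z₀).comp hz₀'
    have h2 : Filter.Tendsto (fun y => g y • f (z y)) 𝒰 (𝓝 x) := by
      have : ∀ y, g y • f (z y) = f y := fun y => by rw [← hequiv, hgz]
      simpa only [this] using hx
    exact h1.prodMk_nhds h2
  rw [isProperMap_iff_ultrafilter] at hX
  have key' : Filter.Tendsto (fun p : X × G => (p.1, p.2 • p.1))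
      (Ultrafilter.map (fun y => (f (z y), g y)) 𝒰) (𝓝 (f z₀, x)) :=
    Filter.tendsto_map'_iff.2 key
  obtain ⟨⟨x', g₀⟩, hpair, hle⟩ := hX.2 key'
  simp only [Prod.mk.injEq] at hpair
  obtain ⟨hx', hg₀x⟩ := hpair
  have hg₀ : Filter.Tendsto g 𝒰 (𝓝 g₀) :=
    ((continuous_snd.tendsto _).comp hle).congr (fun y => rfl)
  -- conclude : 𝒰 converges to g₀ • z₀
  refine ⟨g₀ • z₀, ?_, ?_⟩
  · rw [hequiv, ← hx', hg₀x]
  · have : Filter.Tendsto (fun y => g y • z y) 𝒰 (𝓝 (g₀ • z₀)) := hg₀.smul hz₀'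
    simp only [hgz] at this
    exact Filter.tendsto_id'.1 this
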